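/- Let G be an amply regular graph with parameters (n, d, α, β) with β > α ≥ 1. Then for every edge xy of G, the Lin-Lu-Yau curvature satisfies κ(x,y) ≥ 3/d. -/

import Mathlib

open Filter Topology
open scoped Classical

variable {V : Type*}

/-- The L¹-Wasserstein (optimal transport) distance between two probability
measures on the vertex set of a graph, with respect to the graph distance. -/
noncomputable def wassDist (G : SimpleGraph V) (μ ν : V → ℝ) : ℝ :=
  sInf {c : ℝ | ∃ π : V → V → ℝ, (∀ u v, 0 ≤ π u v) ∧
    (∀ u, ∑ᶠ v, π u v = μ u) ∧ (∀ v, ∑ᶠ u, π u v = ν v) ∧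
    c = ∑ᶠ u, ∑ᶠ v, (G.dist u v : ℝ) * π u v}

/-- The probability measure `μ_x^p` with idleness `p` around vertex `x`. -/
noncomputable def muIdle (G : SimpleGraph V) [G.LocallyFinite] (p : ℝ) (x : V) : V → ℝ :=
  fun v => if v = x then p else if G.Adj x v then (1 - p) / (G.degree x : ℝ) else 0

/-- The `p`-Ollivier-Ricci curvature `κ_p(x,y)`. -/
noncomputable def ollivier (G : SimpleGraph V) [G.LocallyFinite] (p : ℝ) (x y : V) : ℝ :=
  1 - wassDist G (muIdle G p x) (muIdle G p y) / (G.dist x y : ℝ)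

/-- The Lin-Lu-Yau curvature `κ(x,y) = lim_{p→1} κ_p(x,y)/(1-p)`. -/
noncomputable def lly (G : SimpleGraph V) [G.LocallyFinite] (x y : V) : ℝ :=
  limUnder (𝓝[<] (1 : ℝ)) (fun p => ollivier G p x y / (1 - p))

/-- An amply regular graph with parameters `(n, d, a, b)`. -/
def IsAmplyRegular (G : SimpleGraph V) [Fintype V] [DecidableEq V] [DecidableRel G.Adj]
    (n d a b : ℕ) : Prop :=
  Fintype.card V = n ∧ G.IsRegularOfDegree d ∧
  (∀ x y : V, G.Adj x y → (G.neighborFinset x ∩ G.neighborFinset y).card = a) ∧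
  (∀ x y : V, G.dist x y = 2 → (G.neighborFinset x ∩ G.neighborFinset y).card = b)

section WassAux

variable [Fintype V] [DecidableEq V] (G : SimpleGraph V) [DecidableRel G.Adj]

private lemma aux_bddBelow (μ ν : V → ℝ) :
    BddBelow {c : ℝ | ∃ π : V → V → ℝ, (∀ u v, 0 ≤ π u v) ∧
      (∀ u, ∑ᶠ v, π u v = μ u) ∧ (∀ v, ∑ᶠ u, π u v = ν v) ∧
      c = ∑ᶠ u, ∑ᶠ v, (G.dist u v : ℝ) * π u v} := by
  refine ⟨0, ?_⟩
  rintro c ⟨π, h0, -, -, rfl⟩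
  simp only [finsum_eq_sum_of_fintype]
  apply Finset.sum_nonneg
  intro u _
  apply Finset.sum_nonneg
  intro v _
  exact mul_nonneg (by positivity) (h0 u v)

private lemma aux_wassDist_le (μ ν : V → ℝ) (π : V → V → ℝ) (h0 : ∀ u v, 0 ≤ π u v)
    (h1 : ∀ u, ∑ v, π u v = μ u) (h2 : ∀ v, ∑ u, π u v = ν v) :
    wassDist G μ ν ≤ ∑ u, ∑ v, (G.dist u v : ℝ) * π u v := by
  apply csInf_le (aux_bddBelow G μ ν)
  exact ⟨π, h0, by simpa [finsum_eq_sum_of_fintype] using h1,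
    by simpa [finsum_eq_sum_of_fintype] using h2, by simp [finsum_eq_sum_of_fintype]⟩

private lemma aux_le_wassDist (μ ν : V → ℝ) (f : V → ℝ)
    (hf : ∀ u v, f u - f v ≤ (G.dist u v : ℝ))
    (hne : {c : ℝ | ∃ π : V → V → ℝ, (∀ u v, 0 ≤ π u v) ∧
      (∀ u, ∑ᶠ v, π u v = μ u) ∧ (∀ v, ∑ᶠ u, π u v = ν v) ∧
      c = ∑ᶠ u, ∑ᶠ v, (G.dist u v : ℝ) * π u v}.Nonempty) :
    (∑ u, f u * μ u) - (∑ v, f v * ν v) ≤ wassDist G μ ν := by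
  apply le_csInf hne
  rintro c ⟨π, h0, h1, h2, rfl⟩
  simp only [finsum_eq_sum_of_fintype] at h1 h2 ⊢
  have e1 : (∑ u, f u * μ u) = ∑ u, ∑ v, f u * π u v := by
    refine Finset.sum_congr rfl fun u _ => ?_
    rw [← h1 u, Finset.mul_sum]
  have e2 : (∑ v, f v * ν v) = ∑ u, ∑ v, f v * π u v := by
    rw [Finset.sum_comm]
    refine Finset.sum_congr rfl fun v _ => ?_
    rw [← h2 v, Finset.mul_sum]
  rw [e1, e2, ← Finset.sum_sub_distrib]
  apply Finset.sum_le_sum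
  intro u _
  rw [← Finset.sum_sub_distrib]
  apply Finset.sum_le_sum
  intro v _
  rw [← sub_mul]
  exact mul_le_mul_of_nonneg_right (hf u v) (h0 u v)

end WassAux
set_option linter.unusedSectionVars false

section MuAux

variable [Fintype V] [DecidableEq V] (G : SimpleGraph V) [DecidableRel G.Adj]

private lemma aux_mu_eval (p : ℝ) (w : V) (φ : V → ℝ) :
    ∑ u, φ u * muIdle G p w u
      = p * φ w + ((1 - p) / (G.degree w : ℝ)) * ∑ u ∈ G.neighborFinset w, φ u := by
  classical
  have hsub : ∑ u, φ u * muIdle G p w u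
      = ∑ u ∈ insert w (G.neighborFinset w), φ u * muIdle G p w u := by
    symm
    apply Finset.sum_subset (Finset.subset_univ _)
    intro u _ hu
    simp only [Finset.mem_insert, SimpleGraph.mem_neighborFinset, not_or] at hu
    have : muIdle G p w u = 0 := by
      simp only [muIdle, if_neg hu.1, if_neg hu.2]
    rw [this, mul_zero]
  rw [hsub, Finset.sum_insert (by simp [SimpleGraph.mem_neighborFinset])]
  have h1 : muIdle G p w w = p := by simp [muIdle]
  have h2 : ∑ u ∈ G.neighborFinset w, φ u * muIdle G p w u
      = ((1 - p) / (G.degree w : ℝ)) * ∑ u ∈ G.neighborFinset w, φ u := by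
    rw [Finset.mul_sum]
    refine Finset.sum_congr rfl fun u hu => ?_
    rw [SimpleGraph.mem_neighborFinset] at hu
    have hne : u ≠ w := fun h => G.irrefl (h ▸ hu)
    simp only [muIdle, if_neg hne, if_pos hu]
    ring
  rw [h1, h2]
  ring

private lemma aux_mu_sum_one {d : ℕ} (hreg : G.IsRegularOfDegree d) (hd : 1 ≤ d)
    (p : ℝ) (w : V) : ∑ u, muIdle G p w u = 1 := by
  have h := aux_mu_eval G p w (fun _ => (1 : ℝ))
  simp only [one_mul, mul_one] at h
  rw [h, Finset.sum_const, SimpleGraph.card_neighborFinset_eq_degree, hreg w,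
    nsmul_eq_mul, mul_one]
  have hd0 : ((d : ℝ)) ≠ 0 := by
    have h2 : (0:ℝ) < d := by exact_mod_cast hd
    linarith
  field_simp
  ring

private lemma aux_mu_nonneg (p : ℝ) (hp0 : 0 ≤ p) (hp1 : p ≤ 1) (w u : V) :
    0 ≤ muIdle G p w u := by
  unfold muIdle
  split
  · exact hp0
  · split
    · have : (0:ℝ) ≤ (G.degree w : ℝ) := by positivity
      have h1 : (0:ℝ) ≤ 1 - p := by linarith
      positivity
    · exact le_refl 0

end MuAux
section AnalysisAux

variable [Fintype V] [DecidableEq V] (G : SimpleGraph V) [DecidableRel G.Adj]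

private lemma aux_S_nonempty {d : ℕ} (hreg : G.IsRegularOfDegree d) (hd : 1 ≤ d)
    (x y : V) (p : ℝ) (hp0 : 0 ≤ p) (hp1 : p ≤ 1) :
    {c : ℝ | ∃ π : V → V → ℝ, (∀ u v, 0 ≤ π u v) ∧
      (∀ u, ∑ᶠ v, π u v = muIdle G p x u) ∧ (∀ v, ∑ᶠ u, π u v = muIdle G p y v) ∧
      c = ∑ᶠ u, ∑ᶠ v, (G.dist u v : ℝ) * π u v}.Nonempty := by
  classical
  refine ⟨_, ⟨fun u v => muIdle G p x u * muIdle G p y v, ?_, ?_, ?_, rfl⟩⟩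
  · intro u v
    exact mul_nonneg (aux_mu_nonneg G p hp0 hp1 x u) (aux_mu_nonneg G p hp0 hp1 y v)
  · intro u
    rw [finsum_eq_sum_of_fintype, ← Finset.mul_sum, aux_mu_sum_one G hreg hd p y, mul_one]
  · intro v
    rw [finsum_eq_sum_of_fintype]
    have : ∑ u, muIdle G p x u * muIdle G p y v = (∑ u, muIdle G p x u) * muIdle G p y v := by
      rw [Finset.sum_mul]
    rw [this, aux_mu_sum_one G hreg hd p x, one_mul]

/-- Lower bound via the 1-Lipschitz function `u ↦ dist u y`. -/
private lemma aux_wass_lower (hconn : G.Connected) {d : ℕ} (hreg : G.IsRegularOfDegree d)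
    (hd : 1 ≤ d) (x y : V) (hxy : G.Adj x y) (p : ℝ) (hp0 : 0 ≤ p) (hp1 : p ≤ 1) :
    2 * p - 1 ≤ wassDist G (muIdle G p x) (muIdle G p y) := by
  classical
  have key := aux_le_wassDist G (muIdle G p x) (muIdle G p y)
      (fun u => (G.dist u y : ℝ)) ?_ (aux_S_nonempty G hreg hd x y p hp0 hp1)
  · have e1 : ∑ u, (G.dist u y : ℝ) * muIdle G p x u
        = p * (G.dist x y : ℝ)
          + ((1 - p) / (G.degree x : ℝ)) * ∑ u ∈ G.neighborFinset x, (G.dist u y : ℝ) :=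
      aux_mu_eval G p x _
    have e2 : ∑ u, (G.dist u y : ℝ) * muIdle G p y u
        = ((1 - p) / (G.degree y : ℝ)) * ∑ u ∈ G.neighborFinset y, (G.dist u y : ℝ) := by
      rw [aux_mu_eval G p y _]
      simp [SimpleGraph.dist_self]
    have e3 : ∑ u ∈ G.neighborFinset y, (G.dist u y : ℝ) = (d : ℝ) := by
      rw [Finset.sum_congr rfl (fun u hu => ?_), Finset.sum_const, nsmul_eq_mul, mul_one]
      · rw [SimpleGraph.card_neighborFinset_eq_degree, hreg y]
      · rw [SimpleGraph.mem_neighborFinset] at hu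
        have : G.dist u y = 1 := SimpleGraph.dist_eq_one_iff_adj.mpr hu.symm
        rw [this, Nat.cast_one]
    have e4 : (G.dist x y : ℝ) = 1 := by
      rw [SimpleGraph.dist_eq_one_iff_adj.mpr hxy, Nat.cast_one]
    have e5 : 0 ≤ ((1 - p) / (G.degree x : ℝ)) * ∑ u ∈ G.neighborFinset x, (G.dist u y : ℝ) := by
      apply mul_nonneg
      · apply div_nonneg (by linarith) (by positivity)
      · apply Finset.sum_nonneg; intro u _; positivity
    have e6 : ((1 - p) / (G.degree y : ℝ)) * (d:ℝ) = 1 - p := by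
      rw [hreg y]
      have hd0 : ((d : ℝ)) ≠ 0 := by
        have h2 : (0:ℝ) < d := by exact_mod_cast hd
        linarith
      field_simp
    rw [e1, e2, e3, e4, e6] at key
    linarith
  · intro u v
    have tri := hconn.dist_triangle (u := u) (v := v) (w := y)
    have : (G.dist u y : ℝ) ≤ (G.dist u v : ℝ) + (G.dist v y : ℝ) := by exact_mod_cast tri
    linarith

/-- mixing bound: `W_{p'} ≤ s W_p + (1-s)` where `s = (1-p')/(1-p)`. -/
private lemma aux_wass_mix {d : ℕ} (hreg : G.IsRegularOfDegree d) (hd : 1 ≤ d)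
    (x y : V) (hxy : G.Adj x y) (p p' : ℝ) (hp0 : 0 ≤ p) (hpp : p ≤ p') (hp1 : p' < 1) :
    wassDist G (muIdle G p' x) (muIdle G p' y)
      ≤ ((1 - p') / (1 - p)) * wassDist G (muIdle G p x) (muIdle G p y)
        + (1 - (1 - p') / (1 - p)) := by
  classical
  set s : ℝ := (1 - p') / (1 - p) with hs
  have hp1' : p < 1 := lt_of_le_of_lt hpp hp1
  have h1p : (0:ℝ) < 1 - p := by linarith
  have hs0 : 0 < s := div_pos (by linarith) h1p
  have hs1 : s ≤ 1 := by rw [hs, div_le_one h1p]; linarith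
  have hsp : s * (1 - p) = 1 - p' := by rw [hs]; field_simp
  have hd0 : ((d:ℝ)) ≠ 0 := by
    have h2 : (0:ℝ) < d := by exact_mod_cast hd
    linarith
  have e4 : (G.dist x y : ℝ) = 1 := by
    rw [SimpleGraph.dist_eq_one_iff_adj.mpr hxy, Nat.cast_one]
  set W' := wassDist G (muIdle G p' x) (muIdle G p' y) with hW'
  have key : ∀ c ∈ {c : ℝ | ∃ π : V → V → ℝ, (∀ u v, 0 ≤ π u v) ∧
      (∀ u, ∑ᶠ v, π u v = muIdle G p x u) ∧ (∀ v, ∑ᶠ u, π u v = muIdle G p y v) ∧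
      c = ∑ᶠ u, ∑ᶠ v, (G.dist u v : ℝ) * π u v},
      (W' - (1 - s)) / s ≤ c := by
    rintro c ⟨π, h0, h1, h2, rfl⟩
    simp only [finsum_eq_sum_of_fintype] at h1 h2 ⊢
    rw [div_le_iff₀ hs0, sub_le_iff_le_add]
    set π' : V → V → ℝ := fun u v => s * π u v + (1 - s) * (if u = x ∧ v = y then 1 else 0)
      with hπ'
    have hle := aux_wassDist_le G (muIdle G p' x) (muIdle G p' y) π' ?_ ?_ ?_
    · refine le_trans hle (le_of_eq ?_)
      have expand : ∀ u, ∑ v, (G.dist u v : ℝ) * π' u v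
          = s * (∑ v, (G.dist u v : ℝ) * π u v)
            + (1 - s) * (∑ v, (G.dist u v : ℝ) * (if u = x ∧ v = y then 1 else 0)) := by
        intro u
        rw [Finset.mul_sum, Finset.mul_sum, ← Finset.sum_add_distrib]
        refine Finset.sum_congr rfl fun v _ => ?_
        simp only [hπ']
        ring
      rw [Finset.sum_congr rfl (fun u _ => expand u), Finset.sum_add_distrib,
        ← Finset.mul_sum, ← Finset.mul_sum]
      have inner : ∀ u, (∑ v, (G.dist u v : ℝ) * (if u = x ∧ v = y then 1 else 0))
          = (if u = x then (G.dist x y : ℝ) else 0) := by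
        intro u
        by_cases hu : u = x
        · rw [if_pos hu]
          have hpt : ∀ v, (G.dist u v : ℝ) * (if u = x ∧ v = y then 1 else 0)
              = (if v = y then (G.dist x y : ℝ) else 0) := by
            intro v
            by_cases hv : v = y
            · rw [if_pos hv, if_pos ⟨hu, hv⟩, mul_one, hu, hv]
            · rw [if_neg hv, if_neg (by tauto), mul_zero]
          rw [Finset.sum_congr rfl (fun v _ => hpt v), Finset.sum_ite_eq' Finset.univ y]
          simp
        · rw [if_neg hu]
          have hpt : ∀ v, (G.dist u v : ℝ) * (if u = x ∧ v = y then 1 else 0) = 0 := by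
            intro v; rw [if_neg (by tauto), mul_zero]
          rw [Finset.sum_congr rfl (fun v _ => hpt v)]
          exact Finset.sum_const_zero
      have ind : ∑ u, ∑ v, (G.dist u v : ℝ) * (if u = x ∧ v = y then 1 else 0) = 1 := by
        rw [Finset.sum_congr rfl (fun u _ => inner u),
          Finset.sum_ite_eq' Finset.univ x (fun _ => (G.dist x y : ℝ))]
        simp [e4]
      rw [ind, mul_one]
      ring
    · intro u v
      have hind : (0:ℝ) ≤ (if u = x ∧ v = y then (1:ℝ) else 0) := by positivity
      have h0' := h0 u v
      simp only [hπ']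
      nlinarith
    · intro u
      have hrw : ∑ v, π' u v = s * (∑ v, π u v)
          + (1 - s) * (∑ v, (if u = x ∧ v = y then (1:ℝ) else 0)) := by
        rw [Finset.mul_sum, Finset.mul_sum, ← Finset.sum_add_distrib]
      rw [hrw, h1 u]
      have hsum : ∑ v, (if u = x ∧ v = y then (1:ℝ) else 0)
          = (if u = x then (1:ℝ) else 0) := by
        by_cases hu : u = x
        · rw [if_pos hu]
          have hpt : ∀ v, (if u = x ∧ v = y then (1:ℝ) else 0)
              = (if v = y then (1:ℝ) else 0) := by
            intro v
            by_cases hv : v = y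
            · rw [if_pos hv, if_pos ⟨hu, hv⟩]
            · rw [if_neg hv, if_neg (by tauto)]
          rw [Finset.sum_congr rfl (fun v _ => hpt v), Finset.sum_ite_eq' Finset.univ y]
          simp
        · rw [if_neg hu]
          have hpt : ∀ v, (if u = x ∧ v = y then (1:ℝ) else 0) = 0 := by
            intro v; rw [if_neg (by tauto)]
          rw [Finset.sum_congr rfl (fun v _ => hpt v)]
          exact Finset.sum_const_zero
      rw [hsum]
      by_cases hu : u = x
      · rw [hu]
        simp only [muIdle]
        simp
        linarith [hsp]
      · rw [if_neg hu]
        simp only [muIdle, if_neg hu, mul_zero, add_zero]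
        by_cases hadj : G.Adj x u
        · rw [if_pos hadj, if_pos hadj, hreg x]
          field_simp
          linarith [hsp]
        · rw [if_neg hadj, if_neg hadj, mul_zero]
    · intro v
      have hrw : ∑ u, π' u v = s * (∑ u, π u v)
          + (1 - s) * (∑ u, (if u = x ∧ v = y then (1:ℝ) else 0)) := by
        rw [Finset.mul_sum, Finset.mul_sum, ← Finset.sum_add_distrib]
      rw [hrw, h2 v]
      have hsum : ∑ u, (if u = x ∧ v = y then (1:ℝ) else 0)
          = (if v = y then (1:ℝ) else 0) := by
        by_cases hv : v = y
        · rw [if_pos hv]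
          have hpt : ∀ u, (if u = x ∧ v = y then (1:ℝ) else 0)
              = (if u = x then (1:ℝ) else 0) := by
            intro u
            by_cases hu : u = x
            · rw [if_pos hu, if_pos ⟨hu, hv⟩]
            · rw [if_neg hu, if_neg (by tauto)]
          rw [Finset.sum_congr rfl (fun u _ => hpt u), Finset.sum_ite_eq' Finset.univ x]
          simp
        · rw [if_neg hv]
          have hpt : ∀ u, (if u = x ∧ v = y then (1:ℝ) else 0) = 0 := by
            intro u; rw [if_neg (by tauto)]
          rw [Finset.sum_congr rfl (fun u _ => hpt u)]
          exact Finset.sum_const_zero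
      rw [hsum]
      by_cases hv : v = y
      · rw [hv]
        simp only [muIdle]
        simp
        linarith [hsp]
      · rw [if_neg hv]
        simp only [muIdle, if_neg hv, mul_zero, add_zero]
        by_cases hadj : G.Adj y v
        · rw [if_pos hadj, if_pos hadj, hreg y]
          field_simp
          linarith [hsp]
        · rw [if_neg hadj, if_neg hadj, mul_zero]
  have hW := le_csInf (aux_S_nonempty G hreg hd x y p hp0 (le_of_lt hp1')) key
  have hWdef : wassDist G (muIdle G p x) (muIdle G p y)
      = sInf {c : ℝ | ∃ π : V → V → ℝ, (∀ u v, 0 ≤ π u v) ∧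
        (∀ u, ∑ᶠ v, π u v = muIdle G p x u) ∧ (∀ v, ∑ᶠ u, π u v = muIdle G p y v) ∧
        c = ∑ᶠ u, ∑ᶠ v, (G.dist u v : ℝ) * π u v} := rfl
  rw [← hWdef] at hW
  rw [div_le_iff₀ hs0] at hW
  rw [hW'] at hW ⊢
  nlinarith [hW]

end AnalysisAux
section LimitAux

variable [Fintype V] [DecidableEq V] (G : SimpleGraph V) [DecidableRel G.Adj]

private lemma aux_lly_ge (hconn : G.Connected) {d : ℕ} (hreg : G.IsRegularOfDegree d)
    (hd : 1 ≤ d) (x y : V) (hxy : G.Adj x y) :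
    ollivier G (1/2) x y / (1 - 1/2) ≤ lly G x y := by
  classical
  have hdxy : (G.dist x y : ℝ) = 1 := by
    rw [SimpleGraph.dist_eq_one_iff_adj.mpr hxy, Nat.cast_one]
  have holl : ∀ p : ℝ, ollivier G p x y
      = 1 - wassDist G (muIdle G p x) (muIdle G p y) := by
    intro p
    rw [ollivier, hdxy, div_one]
  set g : ℝ → ℝ := fun p => ollivier G p x y / (1 - p) with hg
  have mono : MonotoneOn g (Set.Ioo (0:ℝ) 1) := by
    rintro p ⟨hp0, hp1⟩ p' ⟨hp0', hp1'⟩ hpp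
    have h1p : (0:ℝ) < 1 - p := by linarith
    have h1p' : (0:ℝ) < 1 - p' := by linarith
    have hmix := aux_wass_mix G hreg hd x y hxy p p' (le_of_lt hp0) hpp hp1'
    have hsp : ((1 - p')/(1 - p)) * (1 - p) = 1 - p' := by field_simp
    simp only [hg, holl]
    rw [div_le_div_iff₀ h1p h1p']
    set W := wassDist G (muIdle G p x) (muIdle G p y)
    set W' := wassDist G (muIdle G p' x) (muIdle G p' y)
    have hmix' : (1 - p) * W' ≤ (1 - p') * W + (1 - p) - (1 - p') := by
      have := mul_le_mul_of_nonneg_left hmix (le_of_lt h1p)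
      calc (1 - p) * W' ≤ (1 - p) * (((1 - p') / (1 - p)) * W + (1 - (1 - p') / (1 - p))) := this
        _ = ((1 - p')/(1 - p)) * (1 - p) * W + ((1-p) - ((1 - p')/(1 - p)) * (1 - p)) := by ring
        _ = (1 - p') * W + (1 - p) - (1 - p') := by rw [hsp]; ring
    nlinarith [hmix']
  have bdd : BddAbove (g '' Set.Ioo (0:ℝ) 1) := by
    refine ⟨2, ?_⟩
    rintro w ⟨p, ⟨hp0, hp1⟩, rfl⟩
    have h1p : (0:ℝ) < 1 - p := by linarith
    have hlow := aux_wass_lower G hconn hreg hd x y hxy p (le_of_lt hp0) (le_of_lt hp1)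
    simp only [hg, holl]
    rw [div_le_iff₀ h1p]
    linarith
  have htend := MonotoneOn.tendsto_nhdsWithin_Ioo_left
      (⟨1/2, by norm_num, by norm_num⟩ : (Set.Ioo (0:ℝ) 1).Nonempty) mono bdd
  have hlim : lly G x y = sSup (g '' Set.Ioo (0:ℝ) 1) := by
    have : limUnder (𝓝[<] (1:ℝ)) g = sSup (g '' Set.Ioo (0:ℝ) 1) := htend.limUnder_eq
    exact this
  rw [hlim]
  exact le_csSup bdd ⟨1/2, ⟨by norm_num, by norm_num⟩, rfl⟩

end LimitAux
section UpperAux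

variable [Fintype V] [DecidableEq V] (G : SimpleGraph V) [DecidableRel G.Adj]

private lemma aux_sum_one_pt (w : V) (a : ℝ) :
    ∑ v : V, (if v = w then a else 0) = a := by
  rw [Finset.sum_ite_eq' Finset.univ w (fun _ => a)]
  simp

private lemma aux_sum_two_pt {w₁ w₂ : V} (hne : w₁ ≠ w₂) (a b : ℝ) :
    ∑ v : V, (if v = w₁ then a else if v = w₂ then b else 0) = a + b := by
  have hpt : ∀ v, (if v = w₁ then a else if v = w₂ then b else 0)
      = (if v = w₁ then a else 0) + (if v = w₂ then b else 0) := by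
    intro v
    by_cases h1 : v = w₁
    · subst h1
      rw [if_pos rfl, if_pos rfl, if_neg hne, add_zero]
    · rw [if_neg h1, if_neg h1, zero_add]
  rw [Finset.sum_congr rfl (fun v _ => hpt v), Finset.sum_add_distrib,
    aux_sum_one_pt w₁ a, aux_sum_one_pt w₂ b]

set_option maxHeartbeats 2000000 in
private lemma aux_wass_upper (hconn : G.Connected) {d a b : ℕ}
    (hreg : G.IsRegularOfDegree d)
    (hadj : ∀ x y : V, G.Adj x y → (G.neighborFinset x ∩ G.neighborFinset y).card = a)
    (hdist : ∀ x y : V, G.dist x y = 2 → (G.neighborFinset x ∩ G.neighborFinset y).card = b)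
    (hba : a < b) (ha : 1 ≤ a) (x y : V) (hxy : G.Adj x y) :
    wassDist G (muIdle G (1/2) x) (muIdle G (1/2) y)
      ≤ 1/2 + ((1 - (1/2:ℝ)) / (d:ℝ)) * ((d:ℝ) - 3) := by
  classical
  set q : ℝ := (1 - (1/2:ℝ)) / (d:ℝ) with hq
  have hdeg : G.degree x = d := hreg x
  have hd1 : 1 ≤ d := by
    rw [← hdeg, ← SimpleGraph.card_neighborFinset_eq_degree]
    exact Finset.card_pos.mpr ⟨y, (SimpleGraph.mem_neighborFinset G x y).mpr hxy⟩
  have hdR : (0:ℝ) < (d:ℝ) := by exact_mod_cast hd1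
  have hq0 : 0 ≤ q := by rw [hq]; positivity
  have hqhalf : q ≤ 1/2 := by
    rw [hq, div_le_iff₀ hdR]
    have : (1:ℝ) ≤ (d:ℝ) := by exact_mod_cast hd1
    nlinarith
  have hb2 : 2 ≤ b := by omega
  have hbR : (0:ℝ) < (b:ℝ) - 1 := by
    have : (2:ℝ) ≤ (b:ℝ) := by exact_mod_cast hb2
    linarith
  have hxyne : x ≠ y := G.ne_of_adj hxy
  set Cs : Finset V := G.neighborFinset x ∩ G.neighborFinset y with hCs
  set As : Finset V := G.neighborFinset x \ (G.neighborFinset y ∪ {y}) with hAs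
  set Bs : Finset V := G.neighborFinset y \ (G.neighborFinset x ∪ {x}) with hBs
  have memCs : ∀ z, z ∈ Cs ↔ G.Adj x z ∧ G.Adj y z := by
    intro z; simp [hCs, SimpleGraph.mem_neighborFinset]
  have memAs : ∀ z, z ∈ As ↔ G.Adj x z ∧ ¬ G.Adj y z ∧ z ≠ y := by
    intro z; simp [hAs, SimpleGraph.mem_neighborFinset]; try tauto
  have memBs : ∀ z, z ∈ Bs ↔ G.Adj y z ∧ ¬ G.Adj x z ∧ z ≠ x := by
    intro z; simp [hBs, SimpleGraph.mem_neighborFinset]; try tauto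
  have hNx : G.neighborFinset x = insert y (Cs ∪ As) := by
    ext u
    simp only [Finset.mem_insert, Finset.mem_union, memCs, memAs,
      SimpleGraph.mem_neighborFinset]
    constructor
    · intro hu
      by_cases h1 : u = y
      · exact Or.inl h1
      · by_cases h2 : G.Adj y u
        · exact Or.inr (Or.inl ⟨hu, h2⟩)
        · exact Or.inr (Or.inr ⟨hu, h2, h1⟩)
    · rintro (rfl | ⟨h1, -⟩ | ⟨h1, -⟩) <;> first | exact hxy | exact h1
  have hNy : G.neighborFinset y = insert x (Cs ∪ Bs) := by
    ext u
    simp only [Finset.mem_insert, Finset.mem_union, memCs, memBs,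
      SimpleGraph.mem_neighborFinset]
    constructor
    · intro hu
      by_cases h1 : u = x
      · exact Or.inl h1
      · by_cases h2 : G.Adj x u
        · exact Or.inr (Or.inl ⟨h2, hu⟩)
        · exact Or.inr (Or.inr ⟨hu, h2, h1⟩)
    · rintro (rfl | ⟨-, h1⟩ | ⟨h1, -⟩) <;> first | exact hxy.symm | exact h1
  have hxCs : x ∉ Cs := fun hc => G.irrefl ((memCs x).mp hc).1
  have hyCs : y ∉ Cs := fun hc => G.irrefl ((memCs y).mp hc).2
  have hxAs : x ∉ As := fun hc => G.irrefl ((memAs x).mp hc).1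
  have hyAs : y ∉ As := fun hc => ((memAs y).mp hc).2.2 rfl
  have hxBs : x ∉ Bs := fun hc => ((memBs x).mp hc).2.2 rfl
  have hyBs : y ∉ Bs := fun hc => G.irrefl ((memBs y).mp hc).1
  have hdisjCA : Disjoint Cs As := by
    rw [Finset.disjoint_left]
    intro z hz hz'
    exact ((memAs z).mp hz').2.1 ((memCs z).mp hz).2
  have hdisjCB : Disjoint Cs Bs := by
    rw [Finset.disjoint_left]
    intro z hz hz'
    exact ((memBs z).mp hz').2.1 ((memCs z).mp hz).1
  have hdisjAB : Disjoint As Bs := by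
    rw [Finset.disjoint_left]
    intro z hz hz'
    exact ((memBs z).mp hz').2.1 ((memAs z).mp hz).1
  have hCcard : Cs.card = a := hadj x y hxy
  -- cardinality of As
  have hAcard : 1 + a + As.card = d := by
    have h1 : (G.neighborFinset x).card = d := by
      rw [SimpleGraph.card_neighborFinset_eq_degree]; exact hreg x
    rw [hNx] at h1
    rw [Finset.card_insert_of_notMem (by
      simp only [Finset.mem_union]; try tauto), Finset.card_union_of_disjoint hdisjCA, hCcard] at h1
    omega
  -- distance-2 facts
  have hdist2 : ∀ w, G.Adj x w → ¬ G.Adj y w → w ≠ y → G.dist w y = 2 := by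
    intro w h1 h2 h3
    have hle : G.dist w y ≤ 2 := by
      have := SimpleGraph.dist_le (SimpleGraph.Walk.cons h1.symm (SimpleGraph.Walk.cons hxy .nil))
      simpa using this
    have h0 : G.dist w y ≠ 0 := by
      simp only [ne_eq, hconn.dist_eq_zero_iff]
      exact h3
    have h1' : G.dist w y ≠ 1 := by
      simp only [ne_eq, SimpleGraph.dist_eq_one_iff_adj]
      exact fun hadj2 => h2 hadj2.symm
    omega
  have hdist2B : ∀ w, G.Adj y w → ¬ G.Adj x w → w ≠ x → G.dist w x = 2 := by
    intro w h1 h2 h3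
    have hle : G.dist w x ≤ 2 := by
      have := SimpleGraph.dist_le (SimpleGraph.Walk.cons h1.symm (SimpleGraph.Walk.cons hxy.symm .nil))
      simpa using this
    have h0 : G.dist w x ≠ 0 := by
      simp only [ne_eq, hconn.dist_eq_zero_iff]
      exact h3
    have h1' : G.dist w x ≠ 1 := by
      simp only [ne_eq, SimpleGraph.dist_eq_one_iff_adj]
      exact fun hadj2 => h2 hadj2.symm
    omega
  -- F1 : a ∈ As → |Cs ∩ N(a)| + |Bs ∩ N(a)| + 1 = b
  have hF1 : ∀ w ∈ As, (Cs ∩ G.neighborFinset w).card + (Bs ∩ G.neighborFinset w).card + 1 = b := by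
    intro w hw
    obtain ⟨hw1, hw2, hw3⟩ := (memAs w).mp hw
    have hd2 : G.dist w y = 2 := hdist2 w hw1 hw2 hw3
    have hb' : (G.neighborFinset w ∩ G.neighborFinset y).card = b := hdist w y hd2
    have hsplit : G.neighborFinset w ∩ G.neighborFinset y
        = insert x ((Cs ∩ G.neighborFinset w) ∪ (Bs ∩ G.neighborFinset w)) := by
      rw [hNy]
      ext u
      simp only [Finset.mem_inter, Finset.mem_insert, Finset.mem_union,
        SimpleGraph.mem_neighborFinset]
      constructor
      · rintro ⟨h1, (rfl | h2 | h2)⟩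
        · exact Or.inl rfl
        · exact Or.inr (Or.inl ⟨h2, h1⟩)
        · exact Or.inr (Or.inr ⟨h2, h1⟩)
      · rintro (rfl | ⟨h1, h2⟩ | ⟨h1, h2⟩)
        · exact ⟨hw1.symm, Or.inl rfl⟩
        · exact ⟨h2, Or.inr (Or.inl h1)⟩
        · exact ⟨h2, Or.inr (Or.inr h1)⟩
    rw [hsplit] at hb'
    rw [Finset.card_insert_of_notMem (by
        simp only [Finset.mem_union, Finset.mem_inter]
        push_neg
        constructor
        · intro hc; exact absurd hc hxCs
        · intro hc; exact absurd hc hxBs),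
      Finset.card_union_of_disjoint (Finset.disjoint_of_subset_left
        (Finset.inter_subset_left) ?_)] at hb'
    · omega
    · exact Finset.disjoint_of_subset_right (Finset.inter_subset_left) hdisjCB
  have hF2 : ∀ w ∈ Bs, (Cs ∩ G.neighborFinset w).card + (As ∩ G.neighborFinset w).card + 1 = b := by
    intro w hw
    obtain ⟨hw1, hw2, hw3⟩ := (memBs w).mp hw
    have hd2 : G.dist w x = 2 := hdist2B w hw1 hw2 hw3
    have hb' : (G.neighborFinset w ∩ G.neighborFinset x).card = b := hdist w x hd2
    have hsplit : G.neighborFinset w ∩ G.neighborFinset x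
        = insert y ((Cs ∩ G.neighborFinset w) ∪ (As ∩ G.neighborFinset w)) := by
      rw [hNx]
      ext u
      simp only [Finset.mem_inter, Finset.mem_insert, Finset.mem_union,
        SimpleGraph.mem_neighborFinset]
      constructor
      · rintro ⟨h1, (rfl | h2 | h2)⟩
        · exact Or.inl rfl
        · exact Or.inr (Or.inl ⟨h2, h1⟩)
        · exact Or.inr (Or.inr ⟨h2, h1⟩)
      · rintro (rfl | ⟨h1, h2⟩ | ⟨h1, h2⟩)
        · exact ⟨hw1.symm, Or.inl rfl⟩
        · exact ⟨h2, Or.inr (Or.inl h1)⟩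
        · exact ⟨h2, Or.inr (Or.inr h1)⟩
    rw [hsplit] at hb'
    rw [Finset.card_insert_of_notMem (by
        simp only [Finset.mem_union, Finset.mem_inter]
        push_neg
        constructor
        · intro hc; exact absurd hc hyCs
        · intro hc; exact absurd hc hyAs),
      Finset.card_union_of_disjoint (Finset.disjoint_of_subset_left
        (Finset.inter_subset_left) ?_)] at hb'
    · omega
    · exact Finset.disjoint_of_subset_right (Finset.inter_subset_left) hdisjCA
  -- F3 : z ∈ Cs → |As ∩ N(z)| = |Bs ∩ N(z)| and |Cs ∩ N(z)| + |As ∩ N(z)| + 1 = a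
  have hF3 : ∀ z ∈ Cs, (Cs ∩ G.neighborFinset z).card + (As ∩ G.neighborFinset z).card + 1 = a
      ∧ (As ∩ G.neighborFinset z).card = (Bs ∩ G.neighborFinset z).card := by
    intro z hz
    obtain ⟨hz1, hz2⟩ := (memCs z).mp hz
    have ha1 : (G.neighborFinset x ∩ G.neighborFinset z).card = a := hadj x z hz1
    have ha2 : (G.neighborFinset y ∩ G.neighborFinset z).card = a := hadj y z hz2
    have hs1 : G.neighborFinset x ∩ G.neighborFinset z
        = insert y ((Cs ∩ G.neighborFinset z) ∪ (As ∩ G.neighborFinset z)) := by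
      rw [hNx]
      ext u
      simp only [Finset.mem_inter, Finset.mem_insert, Finset.mem_union,
        SimpleGraph.mem_neighborFinset]
      constructor
      · rintro ⟨(rfl | h1 | h1), h2⟩
        · exact Or.inl rfl
        · exact Or.inr (Or.inl ⟨h1, h2⟩)
        · exact Or.inr (Or.inr ⟨h1, h2⟩)
      · rintro (rfl | ⟨h1, h2⟩ | ⟨h1, h2⟩)
        · exact ⟨Or.inl rfl, hz2.symm⟩
        · exact ⟨Or.inr (Or.inl h1), h2⟩
        · exact ⟨Or.inr (Or.inr h1), h2⟩
    have hs2 : G.neighborFinset y ∩ G.neighborFinset z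
        = insert x ((Cs ∩ G.neighborFinset z) ∪ (Bs ∩ G.neighborFinset z)) := by
      rw [hNy]
      ext u
      simp only [Finset.mem_inter, Finset.mem_insert, Finset.mem_union,
        SimpleGraph.mem_neighborFinset]
      constructor
      · rintro ⟨(rfl | h1 | h1), h2⟩
        · exact Or.inl rfl
        · exact Or.inr (Or.inl ⟨h1, h2⟩)
        · exact Or.inr (Or.inr ⟨h1, h2⟩)
      · rintro (rfl | ⟨h1, h2⟩ | ⟨h1, h2⟩)
        · exact ⟨Or.inl rfl, hz1.symm⟩
        · exact ⟨Or.inr (Or.inl h1), h2⟩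
        · exact ⟨Or.inr (Or.inr h1), h2⟩
    rw [hs1] at ha1
    rw [hs2] at ha2
    rw [Finset.card_insert_of_notMem (by
        simp only [Finset.mem_union, Finset.mem_inter]
        push_neg
        exact ⟨fun hc => absurd hc hyCs, fun hc => absurd hc hyAs⟩),
      Finset.card_union_of_disjoint (Finset.disjoint_of_subset_left
        (Finset.inter_subset_left) (Finset.disjoint_of_subset_right
          (Finset.inter_subset_left) hdisjCA))] at ha1
    rw [Finset.card_insert_of_notMem (by
        simp only [Finset.mem_union, Finset.mem_inter]
        push_neg
        exact ⟨fun hc => absurd hc hxCs, fun hc => absurd hc hxBs⟩),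
      Finset.card_union_of_disjoint (Finset.disjoint_of_subset_left
        (Finset.inter_subset_left) (Finset.disjoint_of_subset_right
          (Finset.inter_subset_left) hdisjCB))] at ha2
    omega

  -- ======= the transport plan =======
  set r : V → ℝ := fun z => 1 / ((Bs ∩ G.neighborFinset z).card : ℝ) with hr
  have hr0 : ∀ z, 0 ≤ r z := by intro z; exact div_nonneg zero_le_one (Nat.cast_nonneg _)
  set wgt : V → V → ℝ := fun u v => q / ((b:ℝ) - 1) *
      ((if G.Adj u v then (1:ℝ) else 0)
        + ∑ z ∈ (Cs ∩ G.neighborFinset u) ∩ G.neighborFinset v, r z) with hwgt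
  have hw0 : ∀ u v, 0 ≤ wgt u v := by
    intro u v
    rw [hwgt]
    have h1 : (0:ℝ) ≤ (if G.Adj u v then (1:ℝ) else 0) := by positivity
    have h2 : (0:ℝ) ≤ ∑ z ∈ (Cs ∩ G.neighborFinset u) ∩ G.neighborFinset v, r z :=
      Finset.sum_nonneg fun z _ => hr0 z
    exact mul_nonneg (div_nonneg hq0 (le_of_lt hbR)) (add_nonneg h1 h2)
  have hc0 : (0:ℝ) ≤ q / ((b:ℝ)-1) := div_nonneg hq0 (le_of_lt hbR)
  have hBposA : ∀ u ∈ As, ∀ z ∈ Cs ∩ G.neighborFinset u, 0 < (Bs ∩ G.neighborFinset z).card := by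
    intro u hu z hz
    obtain ⟨hz1, hz2⟩ := Finset.mem_inter.mp hz
    have hzu : G.Adj u z := (SimpleGraph.mem_neighborFinset G u z).mp hz2
    have hu_in : u ∈ As ∩ G.neighborFinset z :=
      Finset.mem_inter.mpr ⟨hu, (SimpleGraph.mem_neighborFinset G z u).mpr hzu.symm⟩
    have hAB := (hF3 z hz1).2
    rw [← hAB]
    exact Finset.card_pos.mpr ⟨u, hu_in⟩
  have hBposB : ∀ v ∈ Bs, ∀ z ∈ Cs ∩ G.neighborFinset v, 0 < (Bs ∩ G.neighborFinset z).card := by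
    intro v hv z hz
    obtain ⟨hz1, hz2⟩ := Finset.mem_inter.mp hz
    refine Finset.card_pos.mpr ⟨v, Finset.mem_inter.mpr ⟨hv, ?_⟩⟩
    rw [SimpleGraph.mem_neighborFinset]
    exact ((SimpleGraph.mem_neighborFinset G v z).mp hz2).symm
  have hadjsumA : ∀ u ∈ As, ∑ v ∈ Bs, (if G.Adj u v then (1:ℝ) else 0)
      = ((Bs ∩ G.neighborFinset u).card : ℝ) := by
    intro u _
    have hpt : ∀ v, (if G.Adj u v then (1:ℝ) else 0)
        = (if v ∈ G.neighborFinset u then (1:ℝ) else 0) := by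
      intro v
      refine if_congr ?_ rfl rfl
      rw [SimpleGraph.mem_neighborFinset]
    rw [Finset.sum_congr rfl (fun v _ => hpt v), Finset.sum_ite_mem, Finset.sum_const,
      nsmul_eq_mul, mul_one]
  have hadjsumB : ∀ v ∈ Bs, ∑ u ∈ As, (if G.Adj u v then (1:ℝ) else 0)
      = ((As ∩ G.neighborFinset v).card : ℝ) := by
    intro v _
    have hpt : ∀ u, (if G.Adj u v then (1:ℝ) else 0)
        = (if u ∈ G.neighborFinset v then (1:ℝ) else 0) := by
      intro u
      refine if_congr ?_ rfl rfl
      rw [SimpleGraph.mem_neighborFinset, SimpleGraph.adj_comm]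
    rw [Finset.sum_congr rfl (fun u _ => hpt u), Finset.sum_ite_mem, Finset.sum_const,
      nsmul_eq_mul, mul_one]
  have hviaA : ∀ u ∈ As, ∑ v ∈ Bs, (∑ z ∈ (Cs ∩ G.neighborFinset u) ∩ G.neighborFinset v, r z)
      = ((Cs ∩ G.neighborFinset u).card : ℝ) := by
    intro u hu
    have step1 : ∀ v, (∑ z ∈ (Cs ∩ G.neighborFinset u) ∩ G.neighborFinset v, r z)
        = ∑ z ∈ Cs ∩ G.neighborFinset u, (if z ∈ G.neighborFinset v then r z else 0) := by
      intro v
      rw [Finset.sum_ite_mem]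
    rw [Finset.sum_congr rfl (fun v _ => step1 v), Finset.sum_comm]
    have step2 : ∀ z ∈ Cs ∩ G.neighborFinset u,
        (∑ v ∈ Bs, if z ∈ G.neighborFinset v then r z else 0) = 1 := by
      intro z hz
      have hpt : ∀ v, (if z ∈ G.neighborFinset v then r z else 0)
          = (if v ∈ G.neighborFinset z then r z else 0) := by
        intro v
        refine if_congr ?_ rfl rfl
        rw [SimpleGraph.mem_neighborFinset, SimpleGraph.mem_neighborFinset,
          SimpleGraph.adj_comm]
      rw [Finset.sum_congr rfl (fun v _ => hpt v), Finset.sum_ite_mem, Finset.sum_const,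
        nsmul_eq_mul]
      have hcard := hBposA u hu z hz
      have hcardR : (0:ℝ) < ((Bs ∩ G.neighborFinset z).card : ℝ) := by exact_mod_cast hcard
      rw [hr]
      exact mul_one_div_cancel hcardR.ne'
    rw [Finset.sum_congr rfl step2, Finset.sum_const, nsmul_eq_mul, mul_one]
  have hviaB : ∀ v ∈ Bs, ∑ u ∈ As, (∑ z ∈ (Cs ∩ G.neighborFinset u) ∩ G.neighborFinset v, r z)
      = ((Cs ∩ G.neighborFinset v).card : ℝ) := by
    intro v hv
    have step0 : ∀ u, (Cs ∩ G.neighborFinset u) ∩ G.neighborFinset v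
        = (Cs ∩ G.neighborFinset v) ∩ G.neighborFinset u := by
      intro u
      rw [Finset.inter_right_comm]
    have step1 : ∀ u, (∑ z ∈ (Cs ∩ G.neighborFinset u) ∩ G.neighborFinset v, r z)
        = ∑ z ∈ Cs ∩ G.neighborFinset v, (if z ∈ G.neighborFinset u then r z else 0) := by
      intro u
      rw [step0 u, Finset.sum_ite_mem]
    rw [Finset.sum_congr rfl (fun u _ => step1 u), Finset.sum_comm]
    have step2 : ∀ z ∈ Cs ∩ G.neighborFinset v,
        (∑ u ∈ As, if z ∈ G.neighborFinset u then r z else 0) = 1 := by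
      intro z hz
      have hpt : ∀ u, (if z ∈ G.neighborFinset u then r z else 0)
          = (if u ∈ G.neighborFinset z then r z else 0) := by
        intro u
        refine if_congr ?_ rfl rfl
        rw [SimpleGraph.mem_neighborFinset, SimpleGraph.mem_neighborFinset,
          SimpleGraph.adj_comm]
      rw [Finset.sum_congr rfl (fun u _ => hpt u), Finset.sum_ite_mem, Finset.sum_const,
        nsmul_eq_mul]
      have hAB := (hF3 z (Finset.mem_inter.mp hz).1).2
      have hcard := hBposB v hv z hz
      have hcardR : (0:ℝ) < ((Bs ∩ G.neighborFinset z).card : ℝ) := by exact_mod_cast hcard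
      rw [hAB, hr]
      exact mul_one_div_cancel hcardR.ne'
    rw [Finset.sum_congr rfl step2, Finset.sum_const, nsmul_eq_mul, mul_one]
  have hR1 : ∀ u ∈ As, ∑ v ∈ Bs, wgt u v = q := by
    intro u hu
    have hexp : ∑ v ∈ Bs, wgt u v = q / ((b:ℝ)-1) *
        ((∑ v ∈ Bs, (if G.Adj u v then (1:ℝ) else 0))
          + ∑ v ∈ Bs, (∑ z ∈ (Cs ∩ G.neighborFinset u) ∩ G.neighborFinset v, r z)) := by
      rw [← Finset.sum_add_distrib, ← Finset.mul_sum]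
    rw [hexp, hadjsumA u hu, hviaA u hu]
    have hcR : ((Cs ∩ G.neighborFinset u).card : ℝ) + ((Bs ∩ G.neighborFinset u).card : ℝ) + 1
        = (b:ℝ) := by exact_mod_cast hF1 u hu
    have hsum : ((Bs ∩ G.neighborFinset u).card : ℝ) + ((Cs ∩ G.neighborFinset u).card : ℝ)
        = (b:ℝ) - 1 := by linarith
    rw [hsum]
    field_simp
  have hR2 : ∀ v ∈ Bs, ∑ u ∈ As, wgt u v = q := by
    intro v hv
    have hexp : ∑ u ∈ As, wgt u v = q / ((b:ℝ)-1) *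
        ((∑ u ∈ As, (if G.Adj u v then (1:ℝ) else 0))
          + ∑ u ∈ As, (∑ z ∈ (Cs ∩ G.neighborFinset u) ∩ G.neighborFinset v, r z)) := by
      rw [← Finset.sum_add_distrib, ← Finset.mul_sum]
    rw [hexp, hadjsumB v hv, hviaB v hv]
    have hcR : ((Cs ∩ G.neighborFinset v).card : ℝ) + ((As ∩ G.neighborFinset v).card : ℝ) + 1
        = (b:ℝ) := by exact_mod_cast hF2 v hv
    have hsum : ((As ∩ G.neighborFinset v).card : ℝ) + ((Cs ∩ G.neighborFinset v).card : ℝ)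
        = (b:ℝ) - 1 := by linarith
    rw [hsum]
    field_simp
  -- the plan
  set π : V → V → ℝ := fun u v =>
    if u = x then (if v = x then q else if v = y then 1/2 - q else 0)
    else if u = y then (if v = y then q else 0)
    else if u ∈ Cs then (if v = u then q else 0)
    else if u ∈ As then (if v ∈ Bs then wgt u v else 0)
    else 0 with hπ
  have hπx : ∀ v, π x v = (if v = x then q else if v = y then 1/2 - q else 0) := by
    intro v; simp only [hπ, eq_self_iff_true, if_true]
  have hπy : ∀ v, π y v = (if v = y then q else 0) := by
    intro v; simp only [hπ, if_neg (Ne.symm hxyne), eq_self_iff_true, if_true]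
  have hπz : ∀ z ∈ Cs, ∀ v, π z v = (if v = z then q else 0) := by
    intro z hz v
    have hz1 : z ≠ x := fun h => hxCs (h ▸ hz)
    have hz2 : z ≠ y := fun h => hyCs (h ▸ hz)
    simp only [hπ, if_neg hz1, if_neg hz2, if_pos hz]
  have hπa : ∀ w ∈ As, ∀ v, π w v = (if v ∈ Bs then wgt w v else 0) := by
    intro w hw v
    have h1 : w ≠ x := fun h => hxAs (h ▸ hw)
    have h2 : w ≠ y := fun h => hyAs (h ▸ hw)
    have h3 : w ∉ Cs := fun hc => (Finset.disjoint_left.mp hdisjCA hc) hw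
    simp only [hπ, if_neg h1, if_neg h2, if_neg h3, if_pos hw]
  have hπ0 : ∀ u, u ≠ x → u ≠ y → u ∉ Cs → u ∉ As → ∀ v, π u v = 0 := by
    intro u h1 h2 h3 h4 v
    simp only [hπ, if_neg h1, if_neg h2, if_neg h3, if_neg h4]
  have hpos : ∀ u v, 0 ≤ π u v := by
    intro u v
    simp only [hπ]
    split_ifs <;> first
      | exact hq0
      | linarith [hqhalf]
      | exact hw0 u v
      | norm_num
  have hTsum : ∀ f : V → ℝ, (∀ u, u ≠ x → u ≠ y → u ∉ Cs → u ∉ As → f u = 0) →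
      (∑ u, f u) = f x + (f y + ((∑ z ∈ Cs, f z) + ∑ w ∈ As, f w)) := by
    intro f hf
    have hsub : ∑ u, f u = ∑ u ∈ insert x (insert y (Cs ∪ As)), f u := by
      symm
      apply Finset.sum_subset (Finset.subset_univ _)
      intro u _ hu
      simp only [Finset.mem_insert, Finset.mem_union, not_or] at hu
      exact hf u hu.1 hu.2.1 hu.2.2.1 hu.2.2.2
    rw [hsub,
      Finset.sum_insert (by
        simp only [Finset.mem_insert, Finset.mem_union]
        push_neg
        exact ⟨hxyne, hxCs, hxAs⟩),
      Finset.sum_insert (by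
        simp only [Finset.mem_union]
        push_neg
        exact ⟨hyCs, hyAs⟩),
      Finset.sum_union hdisjCA]
  have hmuxval : ∀ u, u ≠ x → G.Adj x u → muIdle G (1/2) x u = q := by
    intro u h1 h2
    simp only [muIdle, if_neg h1, if_pos h2, hdeg]
    exact hq.symm
  have hmuyval : ∀ u, u ≠ y → G.Adj y u → muIdle G (1/2) y u = q := by
    intro u h1 h2
    simp only [muIdle, if_neg h1, if_pos h2, hreg y]
    exact hq.symm
  have hnadjx : ∀ u, u ≠ y → u ∉ Cs → u ∉ As → ¬ G.Adj x u := by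
    intro u h1 h2 h3 hadj'
    have : u ∈ G.neighborFinset x := (SimpleGraph.mem_neighborFinset G x u).mpr hadj'
    rw [hNx] at this
    simp only [Finset.mem_insert, Finset.mem_union] at this
    tauto
  have hnadjy : ∀ u, u ≠ x → u ∉ Cs → u ∉ Bs → ¬ G.Adj y u := by
    intro u h1 h2 h3 hadj'
    have : u ∈ G.neighborFinset y := (SimpleGraph.mem_neighborFinset G y u).mpr hadj'
    rw [hNy] at this
    simp only [Finset.mem_insert, Finset.mem_union] at this
    tauto
  -- row sums
  have hrow : ∀ u, (∑ v, π u v) = muIdle G (1/2) x u := by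
    intro u
    by_cases h1 : u = x
    · subst h1
      rw [Finset.sum_congr rfl (fun v _ => hπx v), aux_sum_two_pt hxyne q (1/2 - q)]
      simp only [muIdle, eq_self_iff_true, if_true]
      ring
    · by_cases h2 : u = y
      · subst h2
        rw [Finset.sum_congr rfl (fun v _ => hπy v), aux_sum_one_pt]
        rw [hmuxval u h1 hxy]
      · by_cases h3 : u ∈ Cs
        · rw [Finset.sum_congr rfl (fun v _ => hπz u h3 v), aux_sum_one_pt]
          rw [hmuxval u h1 ((memCs u).mp h3).1]
        · by_cases h4 : u ∈ As
          · rw [Finset.sum_congr rfl (fun v _ => hπa u h4 v), Finset.sum_ite_mem,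
              Finset.univ_inter, hR1 u h4]
            rw [hmuxval u h1 ((memAs u).mp h4).1]
          · rw [Finset.sum_congr rfl (fun v _ => hπ0 u h1 h2 h3 h4 v), Finset.sum_const_zero]
            simp only [muIdle, if_neg h1, if_neg (hnadjx u h2 h3 h4)]
  -- column sums
  have hcol : ∀ v, (∑ u, π u v) = muIdle G (1/2) y v := by
    intro v
    rw [hTsum (fun u => π u v) (fun u h1 h2 h3 h4 => hπ0 u h1 h2 h3 h4 v)]
    rw [hπx v, hπy v]
    rw [Finset.sum_congr rfl (fun z hz => hπz z hz v), Finset.sum_ite_eq Cs v (fun _ => q)]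
    have hAsterm : (∑ w ∈ As, π w v) = (if v ∈ Bs then q else 0) := by
      rw [Finset.sum_congr rfl (fun w hw => hπa w hw v)]
      by_cases hv : v ∈ Bs
      · simp only [if_pos hv]
        exact hR2 v hv
      · simp only [if_neg hv]
        exact Finset.sum_const_zero
    rw [hAsterm]
    by_cases hv1 : v = x
    · have hv2 : v ≠ y := by rw [hv1]; exact hxyne
      have hv3 : v ∉ Cs := by rw [hv1]; exact hxCs
      have hv4 : v ∉ Bs := by rw [hv1]; exact hxBs
      have hadj' : G.Adj y v := by rw [hv1]; exact hxy.symm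
      simp only [if_pos hv1, if_neg hv2, if_neg hv3, if_neg hv4]
      rw [hmuyval v hv2 hadj']
      ring
    · by_cases hv2 : v = y
      · have hv3 : v ∉ Cs := by rw [hv2]; exact hyCs
        have hv4 : v ∉ Bs := by rw [hv2]; exact hyBs
        simp only [if_neg hv1, if_pos hv2, if_neg hv3, if_neg hv4]
        have hmuyy : muIdle G (1/2) y v = 1/2 := by
          rw [hv2]; simp [muIdle]
        rw [hmuyy]
        ring
      · by_cases hv3 : v ∈ Cs
        · have hvBs : v ∉ Bs := fun hc => (Finset.disjoint_left.mp hdisjCB hv3) hc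
          simp only [if_neg hv1, if_neg hv2, if_pos hv3, if_neg hvBs]
          rw [hmuyval v hv2 ((memCs v).mp hv3).2]
          ring
        · by_cases hv4 : v ∈ Bs
          · simp only [if_neg hv1, if_neg hv2, if_neg hv3, if_pos hv4]
            rw [hmuyval v hv2 ((memBs v).mp hv4).1]
            ring
          · simp only [if_neg hv1, if_neg hv2, if_neg hv3, if_neg hv4]
            simp only [muIdle, if_neg hv2, if_neg (hnadjy v hv1 hv3 hv4)]
            ring
  have hdistxy : (G.dist x y : ℝ) = 1 := by
    rw [SimpleGraph.dist_eq_one_iff_adj.mpr hxy, Nat.cast_one]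
  have hcost : (∑ u, ∑ v, (G.dist u v : ℝ) * π u v) ≤ 1/2 + q * ((d:ℝ) - 3) := by
    rw [hTsum (fun u => ∑ v, (G.dist u v:ℝ) * π u v) (fun u h1 h2 h3 h4 =>
      Finset.sum_eq_zero (fun v _ => by rw [hπ0 u h1 h2 h3 h4 v, mul_zero]))]
    have hrowx : (∑ v, (G.dist x v:ℝ) * π x v) = 1/2 - q := by
      have hpt : ∀ v, (G.dist x v:ℝ) * π x v = (if v = y then (1/2 - q) else 0) := by
        intro v
        rw [hπx v]
        by_cases h1 : v = x
        · have hvy : v ≠ y := by rw [h1]; exact hxyne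
          rw [if_pos h1, if_neg hvy, h1, SimpleGraph.dist_self]
          norm_num
        · rw [if_neg h1]
          by_cases h2 : v = y
          · rw [if_pos h2, h2, hdistxy, one_mul]
          · rw [if_neg h2, mul_zero]
      rw [Finset.sum_congr rfl (fun v _ => hpt v), aux_sum_one_pt]
    have hrowy : (∑ v, (G.dist y v:ℝ) * π y v) = 0 := by
      have hpt : ∀ v, (G.dist y v:ℝ) * π y v = 0 := by
        intro v
        rw [hπy v]
        by_cases h2 : v = y
        · rw [h2, SimpleGraph.dist_self]
          norm_num
        · rw [if_neg h2, mul_zero]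
      exact Finset.sum_eq_zero (fun v _ => hpt v)
    have hrowz : ∀ z ∈ Cs, (∑ v, (G.dist z v:ℝ) * π z v) = 0 := by
      intro z hz
      have hpt : ∀ v, (G.dist z v:ℝ) * π z v = 0 := by
        intro v
        rw [hπz z hz v]
        by_cases h2 : v = z
        · rw [h2, SimpleGraph.dist_self]
          norm_num
        · rw [if_neg h2, mul_zero]
      exact Finset.sum_eq_zero (fun v _ => hpt v)
    have hrowa : ∀ w ∈ As, (∑ v, (G.dist w v:ℝ) * π w v)
        ≤ q + q/((b:ℝ)-1) * ((Cs ∩ G.neighborFinset w).card:ℝ) := by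
      intro w hw
      have hred : (∑ v, (G.dist w v:ℝ) * π w v) = ∑ v ∈ Bs, (G.dist w v:ℝ) * wgt w v := by
        have hpt : ∀ v, (G.dist w v:ℝ) * π w v
            = (if v ∈ Bs then (G.dist w v:ℝ) * wgt w v else 0) := by
          intro v
          rw [hπa w hw v]
          by_cases hv : v ∈ Bs
          · rw [if_pos hv, if_pos hv]
          · rw [if_neg hv, if_neg hv, mul_zero]
        rw [Finset.sum_congr rfl (fun v _ => hpt v), Finset.sum_ite_mem, Finset.univ_inter]
      rw [hred]
      have hpt2 : ∀ v ∈ Bs, (G.dist w v:ℝ) * wgt w v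
          ≤ q/((b:ℝ)-1) * ((if G.Adj w v then (1:ℝ) else 0)
            + 2 * ∑ z ∈ (Cs ∩ G.neighborFinset w) ∩ G.neighborFinset v, r z) := by
        intro v hv
        have hS0 : (0:ℝ) ≤ ∑ z ∈ (Cs ∩ G.neighborFinset w) ∩ G.neighborFinset v, r z :=
          Finset.sum_nonneg fun z _ => hr0 z
        by_cases hadj' : G.Adj w v
        · have hd1' : (G.dist w v : ℝ) = 1 := by
            rw [SimpleGraph.dist_eq_one_iff_adj.mpr hadj', Nat.cast_one]
          rw [hd1', one_mul, if_pos hadj', hwgt]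
          simp only [if_pos hadj']
          apply mul_le_mul_of_nonneg_left _ hc0
          linarith
        · rw [if_neg hadj']
          by_cases hne : ((Cs ∩ G.neighborFinset w) ∩ G.neighborFinset v).Nonempty
          · obtain ⟨z, hz⟩ := hne
            obtain ⟨hz1, hz2⟩ := Finset.mem_inter.mp hz
            have haz : G.Adj w z :=
              (SimpleGraph.mem_neighborFinset G w z).mp (Finset.mem_inter.mp hz1).2
            have hzv : G.Adj z v := ((SimpleGraph.mem_neighborFinset G v z).mp hz2).symm
            have hdle : G.dist w v ≤ 2 := by
              have hwk := SimpleGraph.dist_le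
                (SimpleGraph.Walk.cons haz (SimpleGraph.Walk.cons hzv .nil))
              simpa using hwk
            have hdleR : (G.dist w v : ℝ) ≤ 2 := by exact_mod_cast hdle
            rw [hwgt]
            simp only [if_neg hadj', zero_add]
            calc (G.dist w v:ℝ) * (q/((b:ℝ)-1)
                  * ∑ z ∈ (Cs ∩ G.neighborFinset w) ∩ G.neighborFinset v, r z)
                ≤ 2 * (q/((b:ℝ)-1)
                  * ∑ z ∈ (Cs ∩ G.neighborFinset w) ∩ G.neighborFinset v, r z) :=
                  mul_le_mul_of_nonneg_right hdleR (mul_nonneg hc0 hS0)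
              _ = q/((b:ℝ)-1)
                  * (2 * ∑ z ∈ (Cs ∩ G.neighborFinset w) ∩ G.neighborFinset v, r z) := by
                  ring
          · have hempty : ((Cs ∩ G.neighborFinset w) ∩ G.neighborFinset v) = ∅ :=
              Finset.not_nonempty_iff_eq_empty.mp hne
            rw [hwgt]
            simp only [if_neg hadj', hempty, Finset.sum_empty]
            norm_num
      have hsum2 := Finset.sum_le_sum hpt2
      have hrhs : (∑ v ∈ Bs, q/((b:ℝ)-1) * ((if G.Adj w v then (1:ℝ) else 0)
            + 2 * ∑ z ∈ (Cs ∩ G.neighborFinset w) ∩ G.neighborFinset v, r z))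
          = q/((b:ℝ)-1) * (((Bs ∩ G.neighborFinset w).card:ℝ)
            + 2 * ((Cs ∩ G.neighborFinset w).card:ℝ)) := by
        rw [← Finset.mul_sum]
        congr 1
        rw [Finset.sum_add_distrib, hadjsumA w hw]
        congr 1
        rw [← Finset.mul_sum, hviaA w hw]
      rw [hrhs] at hsum2
      refine le_trans hsum2 (le_of_eq ?_)
      have hcR : ((Cs ∩ G.neighborFinset w).card : ℝ)
          + ((Bs ∩ G.neighborFinset w).card : ℝ) + 1 = (b:ℝ) := by
        exact_mod_cast hF1 w hw
      have hBval : ((Bs ∩ G.neighborFinset w).card : ℝ)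
          = ((b:ℝ) - 1) - ((Cs ∩ G.neighborFinset w).card : ℝ) := by linarith
      rw [hBval]
      have hbne : ((b:ℝ) - 1) ≠ 0 := ne_of_gt hbR
      field_simp
      ring
    rw [hrowx, hrowy, Finset.sum_congr rfl hrowz, Finset.sum_const_zero]
    have hsumAs : (∑ w ∈ As, ∑ v, (G.dist w v:ℝ) * π w v)
        ≤ q * (As.card:ℝ)
          + q/((b:ℝ)-1) * ∑ w ∈ As, ((Cs ∩ G.neighborFinset w).card:ℝ) := by
      calc (∑ w ∈ As, ∑ v, (G.dist w v:ℝ) * π w v)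
          ≤ ∑ w ∈ As, (q + q/((b:ℝ)-1) * ((Cs ∩ G.neighborFinset w).card:ℝ)) :=
            Finset.sum_le_sum hrowa
        _ = q * (As.card:ℝ)
            + q/((b:ℝ)-1) * ∑ w ∈ As, ((Cs ∩ G.neighborFinset w).card:ℝ) := by
            rw [Finset.sum_add_distrib, Finset.sum_const, ← Finset.mul_sum, nsmul_eq_mul]
            ring
    have hswap : (∑ w ∈ As, ((Cs ∩ G.neighborFinset w).card:ℝ)) ≤ ((b:ℝ)-1) * ((a:ℝ)-1) := by
      have hnat : ∑ w ∈ As, (Cs ∩ G.neighborFinset w).card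
          = ∑ z ∈ Cs, (As ∩ G.neighborFinset z).card := by
        have e1 : ∀ w, (Cs ∩ G.neighborFinset w).card
            = ∑ z ∈ Cs, (if z ∈ G.neighborFinset w then 1 else 0) := by
          intro w
          rw [Finset.sum_ite_mem, Finset.sum_const, smul_eq_mul, mul_one]
        have e2 : ∀ z, (As ∩ G.neighborFinset z).card
            = ∑ w ∈ As, (if w ∈ G.neighborFinset z then 1 else 0) := by
          intro z
          rw [Finset.sum_ite_mem, Finset.sum_const, smul_eq_mul, mul_one]
        rw [Finset.sum_congr rfl (fun w _ => e1 w), Finset.sum_comm]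
        refine Finset.sum_congr rfl fun z _ => ?_
        rw [e2 z]
        refine Finset.sum_congr rfl fun w _ => ?_
        refine if_congr ?_ rfl rfl
        rw [SimpleGraph.mem_neighborFinset, SimpleGraph.mem_neighborFinset,
          SimpleGraph.adj_comm]
      have hle : ∑ z ∈ Cs, (As ∩ G.neighborFinset z).card ≤ a * (a-1) := by
        calc ∑ z ∈ Cs, (As ∩ G.neighborFinset z).card ≤ ∑ _z ∈ Cs, (a-1) :=
              Finset.sum_le_sum (fun z hz => by have := (hF3 z hz).1; omega)
          _ = a * (a-1) := by rw [Finset.sum_const, smul_eq_mul, hCcard]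
      have hle2 : a * (a-1) ≤ (b-1)*(a-1) := Nat.mul_le_mul_right _ (by omega)
      have hfin : ∑ w ∈ As, (Cs ∩ G.neighborFinset w).card ≤ (b-1)*(a-1) := by
        omega
      calc (∑ w ∈ As, ((Cs ∩ G.neighborFinset w).card:ℝ))
          = ((∑ w ∈ As, (Cs ∩ G.neighborFinset w).card : ℕ) : ℝ) := by push_cast; rfl
        _ ≤ (((b-1)*(a-1) : ℕ):ℝ) := by exact_mod_cast hfin
        _ = ((b:ℝ)-1)*((a:ℝ)-1) := by
            push_cast [Nat.cast_sub (by omega : 1 ≤ b), Nat.cast_sub ha]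
            ring
    have hAsR : (As.card : ℝ) = (d:ℝ) - 1 - (a:ℝ) := by
      have hc := hAcard
      have : ((1 + a + As.card : ℕ) : ℝ) = (d:ℝ) := by exact_mod_cast congrArg Nat.cast hc
      push_cast at this
      linarith
    have hfinal : q * (As.card:ℝ) + q/((b:ℝ)-1) * (∑ w ∈ As, ((Cs ∩ G.neighborFinset w).card:ℝ))
        ≤ q * ((d:ℝ) - 1 - (a:ℝ)) + q * ((a:ℝ)-1) := by
      rw [hAsR]
      have h1 : q/((b:ℝ)-1) * (∑ w ∈ As, ((Cs ∩ G.neighborFinset w).card:ℝ))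
          ≤ q/((b:ℝ)-1) * (((b:ℝ)-1) * ((a:ℝ)-1)) :=
        mul_le_mul_of_nonneg_left hswap hc0
      have h2 : q/((b:ℝ)-1) * (((b:ℝ)-1) * ((a:ℝ)-1)) = q * ((a:ℝ)-1) := by
        field_simp
      linarith
    have hring : (1/2 - q) + (q * ((d:ℝ) - 1 - (a:ℝ)) + q * ((a:ℝ)-1))
        = 1/2 + q * ((d:ℝ) - 3) := by ring
    linarith [hsumAs, hfinal]
  have hW := aux_wassDist_le G (muIdle G (1/2) x) (muIdle G (1/2) y) π hpos hrow hcol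
  calc wassDist G (muIdle G (1/2) x) (muIdle G (1/2) y)
      ≤ ∑ u, ∑ v, (G.dist u v : ℝ) * π u v := hW
    _ ≤ 1/2 + q * ((d:ℝ) - 3) := hcost

end UpperAux
/-- Main theorem: for an amply regular graph with `β > α ≥ 1`, the Lin-Lu-Yau
curvature of any edge is at least `3/d`. -/
theorem stmt8 [Fintype V] [DecidableEq V] (G : SimpleGraph V) [DecidableRel G.Adj]
    (hconn : G.Connected) (n d α β : ℕ) (h : IsAmplyRegular G n d α β)
    (hβα : α < β) (hα : 1 ≤ α) (x y : V) (hxy : G.Adj x y) :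
    (3 : ℝ) / d ≤ lly G x y := by
  classical
  obtain ⟨-, hreg, hadjα, hdistβ⟩ := h
  have hd1 : 1 ≤ d := by
    have hy : y ∈ G.neighborFinset x := (SimpleGraph.mem_neighborFinset G x y).mpr hxy
    have hcard : 0 < (G.neighborFinset x).card := Finset.card_pos.mpr ⟨y, hy⟩
    rw [SimpleGraph.card_neighborFinset_eq_degree, hreg x] at hcard
    omega
  have hupper := aux_wass_upper G hconn hreg hadjα hdistβ hβα hα x y hxy
  have hlly := aux_lly_ge G hconn hreg hd1 x y hxy
  have hdxy : (G.dist x y : ℝ) = 1 := by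
    rw [SimpleGraph.dist_eq_one_iff_adj.mpr hxy, Nat.cast_one]
  have hdR : (0:ℝ) < (d:ℝ) := by exact_mod_cast hd1
  have holl : ollivier G (1/2) x y
      = 1 - wassDist G (muIdle G (1/2) x) (muIdle G (1/2) y) := by
    rw [ollivier, hdxy, div_one]
  have key : (3:ℝ)/(d:ℝ) ≤ ollivier G (1/2) x y / (1 - 1/2) := by
    rw [holl]
    have hval : (1 - (1/2 + ((1 - (1/2:ℝ))/(d:ℝ)) * ((d:ℝ) - 3))) / (1 - 1/2) = 3/(d:ℝ) := by
      field_simp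
      ring
    rw [← hval]
    gcongr
    all_goals linarith [hupper]
  exact le_trans key hlly
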